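/- Let 0 < q10 < q11 < 1, q01 := 1 − q11, q00 := 1 − q10, q1 := q10/(q01 + q10), q0 := 1 − q1, and suppose q01 ≤ q10 < q* ≤ q00 ≤ q11. Consider the four pairs of translated points: {f(0), f(1)} with f(0) = (−q*·q1/q0, q*) and f(1) = (q*, (1 − q*·q0)/q1); {T, F} with T = (q10, q11) and F = (q10 − q10·q*/q01 + q*, q01·(q00 − q*)/q10 + q*); {T1, F0} with T1 = (q*, (q11 − q10)(1 − q*)/q00 + q*) and F0 = (q* − (q11 − q10)·q10·q*/(q00·q01), q*); and {T0, F1} with T0 = (q10·q*/q11, q*) and F1 = (q*, (q11 − q10)(1 − q*)·q01/(q11·q10) + q*). Then the slope of the line through each pair equals q01·(1 − q*)/(q10·q*), so all four lines are parallel, and this common slope is strictly positive. -/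

import Mathlib

noncomputable section

/-- **The four pairs of translated equilibria lie on parallel lines of positive slope
(Claim 5.7).**  With `q01 = 1 − q11 ≤ q10 < q* ≤ q00 = 1 − q10 ≤ q11`,
`q1 = q10/(q01 + q10)`, `q0 = 1 − q1`, the line through each of the pairs
`{f(0), f(1)}`, `{T, F}`, `{T1, F0}`, `{T0, F1}` of translated equilibria has slope
`q01·(1 − q*)/(q10·q*)`, which is strictly positive; hence all four lines are parallel. -/
theorem translated_pairs_parallel (q10 q11 qs : ℝ)
    (hq10 : 0 < q10) (hcorr : q10 < q11) (hq11 : q11 < 1)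
    (h01le : 1 - q11 ≤ q10) (h00le : 1 - q10 ≤ q11)
    (hqs1 : q10 < qs) (hqs2 : qs ≤ 1 - q10) :
    -- abbreviations
    let q01 : ℝ := 1 - q11
    let q00 : ℝ := 1 - q10
    let q1 : ℝ := q10 / (q01 + q10)
    let q0 : ℝ := 1 - q1
    let slope : ℝ := q01 * (1 - qs) / (q10 * qs)
    let f0 : ℝ × ℝ := (-qs * q1 / q0, qs)                                -- translated all-0
    let f1 : ℝ × ℝ := (qs, (1 - qs * q0) / q1)                           -- translated all-1
    let T : ℝ × ℝ := (q10, q11)                                          -- truth-telling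
    let F : ℝ × ℝ := (q10 - q10 * qs / q01 + qs, q01 * (q00 - qs) / q10 + qs)  -- lying
    let T1 : ℝ × ℝ := (qs, (q11 - q10) * (1 - qs) / q00 + qs)
    let F0 : ℝ × ℝ := (qs - (q11 - q10) * q10 * qs / (q00 * q01), qs)
    let T0 : ℝ × ℝ := (q10 * qs / q11, qs)
    let F1 : ℝ × ℝ := (qs, (q11 - q10) * (1 - qs) * q01 / (q11 * q10) + qs)
    0 < slope ∧
    f0.2 - f1.2 = slope * (f0.1 - f1.1) ∧
    T.2 - F.2 = slope * (T.1 - F.1) ∧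
    T1.2 - F0.2 = slope * (T1.1 - F0.1) ∧
    T0.2 - F1.2 = slope * (T0.1 - F1.1) := by
  intro q01 q00 q1 q0 slope f0 f1 T F T1 F0 T0 F1
  have h01 : (0:ℝ) < q01 := by simp only [q01]; linarith
  have h00 : (0:ℝ) < q00 := by simp only [q00]; linarith
  have hqs : (0:ℝ) < qs := lt_trans hq10 hqs1
  have h11 : (0:ℝ) < q11 := lt_trans hq10 hcorr
  have hsum : (0:ℝ) < q01 + q10 := by linarith
  have h1qs : (0:ℝ) < 1 - qs := by linarith
  have hq1 : q1 = q10 / (q01 + q10) := rfl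
  have hq0 : q0 = q01 / (q01 + q10) := by
    simp only [q0, hq1]; field_simp; ring
  refine ⟨by positivity, ?_, ?_, ?_, ?_⟩
  · show qs - (1 - qs * q0) / q1 = slope * (-qs * q1 / q0 - qs)
    rw [hq0, hq1]; simp only [slope]
    field_simp
    ring
  · show q11 - (q01 * (q00 - qs) / q10 + qs) = slope * (q10 - (q10 - q10 * qs / q01 + qs))
    simp only [slope, q00, q01]
    field_simp [(sub_pos.mpr hq11).ne', (show (0:ℝ) < 1 - q10 by linarith).ne']
    ring
  · show (q11 - q10) * (1 - qs) / q00 + qs - qs = slope * (qs - (qs - (q11 - q10) * q10 * qs / (q00 * q01)))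
    simp only [slope, q00, q01]
    field_simp [(sub_pos.mpr hq11).ne', (show (0:ℝ) < 1 - q10 by linarith).ne']
    ring
  · show qs - ((q11 - q10) * (1 - qs) * q01 / (q11 * q10) + qs) = slope * (q10 * qs / q11 - qs)
    simp only [slope, q01]
    field_simp
    ring
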